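/- arXiv:1005.1318 — 2 statements merged into one kernel-verified Lean document; each statement's English description precedes it below -/
import Mathlib

section
/- For every integer k ≥ 1, each entry z_ℓ of the Suzuki coefficient list Z_k satisfies |z_ℓ| ≤ 4k/3^k, and consequently ∑_{ℓ=1}^{5^{k−1}} |z_ℓ| ≤ 4k·5^{k−1}/3^k. -/
noncomputable section

/-- Suzuki splitting parameter `p_r = (4 - 4^{1/(2r-1)})⁻¹`. -/
def suzukiP (r : ℕ) : ℝ := (4 - (4 : ℝ) ^ ((1 : ℝ) / (2 * (r : ℝ) - 1)))⁻¹

/-- The list `Z_k` of time coefficients of the unwound Suzuki formula `S_{2k}`: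
`Z₁ = (1)` and `Z_k = (p_k Z_{k-1}, p_k Z_{k-1}, (1-4p_k) Z_{k-1}, p_k Z_{k-1}, p_k Z_{k-1})`. -/
def suzukiZ : ℕ → List ℝ
  | 0 => [1]
  | 1 => [1]
  | (k + 2) =>
      (suzukiZ (k + 1)).map (fun z => suzukiP (k + 2) * z) ++
      (suzukiZ (k + 1)).map (fun z => suzukiP (k + 2) * z) ++
      (suzukiZ (k + 1)).map (fun z => (1 - 4 * suzukiP (k + 2)) * z) ++
      (suzukiZ (k + 1)).map (fun z => suzukiP (k + 2) * z) ++
      (suzukiZ (k + 1)).map (fun z => suzukiP (k + 2) * z)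

lemma cubicBernoulli (x : ℝ) (hx : 0 ≤ x) (n : ℕ) :
    1 + n * x + (n : ℝ) * ((n : ℝ) - 1) / 2 * x ^ 2
      + (n : ℝ) * ((n : ℝ) - 1) * ((n : ℝ) - 2) / 6 * x ^ 3 ≤ (1 + x) ^ n := by
  induction n with
  | zero => simp
  | succ n ih =>
    have hco : 0 ≤ (n : ℝ) * ((n : ℝ) - 1) * ((n : ℝ) - 2) := by
      rcases n with _ | _ | m
      · norm_num
      · norm_num
      · push_cast
        have hm : (0 : ℝ) ≤ (m : ℝ) := Nat.cast_nonneg m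
        nlinarith [hm, sq_nonneg (m : ℝ), mul_nonneg (mul_nonneg hm hm) hm]
    have h1x : (0 : ℝ) ≤ 1 + x := by linarith
    have step : (1 + n * x + (n : ℝ) * ((n : ℝ) - 1) / 2 * x ^ 2
        + (n : ℝ) * ((n : ℝ) - 1) * ((n : ℝ) - 2) / 6 * x ^ 3) * (1 + x)
        ≤ (1 + x) ^ (n + 1) := by
      calc _ ≤ (1 + x) ^ n * (1 + x) := by
              exact mul_le_mul_of_nonneg_right ih h1x
        _ = (1 + x) ^ (n + 1) := by ring
    refine le_trans ?_ step
    push_cast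
    nlinarith [mul_nonneg hco (pow_nonneg hx 4), pow_nonneg hx 2, pow_nonneg hx 3]

lemma pow_bound (r : ℕ) (hr : 2 ≤ r) :
    (4 : ℝ) ≤ (1 + 3 / (4 * (r : ℝ) - 3)) ^ (2 * r - 1) := by
  have ht : (2 : ℝ) ≤ (r : ℝ) := by exact_mod_cast hr
  set t : ℝ := (r : ℝ) with htdef
  have h4 : (0 : ℝ) < 4 * t - 3 := by linarith
  set x : ℝ := 3 / (4 * t - 3) with hxdef
  have hx : 0 ≤ x := by positivity
  have e1 : x * (4 * t - 3) = 3 := div_mul_cancel₀ 3 (ne_of_gt h4)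
  have hn : ((2 * r - 1 : ℕ) : ℝ) = 2 * t - 1 := by
    have : 1 ≤ 2 * r := by omega
    push_cast [this]; ring
  have hb := cubicBernoulli x hx (2 * r - 1)
  rw [hn] at hb
  refine le_trans ?_ hb
  have key : 4 * (4 * t - 3) ^ 3 ≤
      (1 + (2 * t - 1) * x + (2 * t - 1) * ((2 * t - 1) - 1) / 2 * x ^ 2
        + (2 * t - 1) * ((2 * t - 1) - 1) * ((2 * t - 1) - 2) / 6 * x ^ 3) * (4 * t - 3) ^ 3 := by
    have e2 : x ^ 2 * (4 * t - 3) ^ 2 = 9 := by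
      have : (x * (4 * t - 3)) ^ 2 = 9 := by rw [e1]; norm_num
      nlinarith [this]
    have e3 : x ^ 3 * (4 * t - 3) ^ 3 = 27 := by
      have : (x * (4 * t - 3)) ^ 3 = 27 := by rw [e1]; norm_num
      nlinarith [this]
    have expand : (1 + (2 * t - 1) * x + (2 * t - 1) * ((2 * t - 1) - 1) / 2 * x ^ 2
        + (2 * t - 1) * ((2 * t - 1) - 1) * ((2 * t - 1) - 2) / 6 * x ^ 3) * (4 * t - 3) ^ 3
        = (4 * t - 3) ^ 3 + (2 * t - 1) * 3 * (4 * t - 3) ^ 2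
          + (2 * t - 1) * (2 * t - 2) / 2 * 9 * (4 * t - 3)
          + (2 * t - 1) * (2 * t - 2) * (2 * t - 3) / 6 * 27 := by
      linear_combination ((2 * t - 1) * (4 * t - 3) ^ 2) * e1
        + ((2 * t - 1) * (2 * t - 2) / 2 * (4 * t - 3)) * e2
        + ((2 * t - 1) * (2 * t - 2) * (2 * t - 3) / 6) * e3
    rw [expand]
    nlinarith [mul_nonneg (mul_nonneg (by linarith : (0:ℝ) ≤ t)
      (by linarith : (0:ℝ) ≤ 2 * t - 3)) (by linarith : (0:ℝ) ≤ t - 1)]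
  have hpos : (0 : ℝ) < (4 * t - 3) ^ 3 := by positivity
  calc (4 : ℝ) = 4 * (4 * t - 3) ^ 3 / (4 * t - 3) ^ 3 := by field_simp
    _ ≤ _ := by
        rw [div_le_iff₀ hpos]
        exact key

lemma suzukiP_bounds (r : ℕ) (hr : 2 ≤ r) :
    1 / 3 < suzukiP r ∧ suzukiP r ≤ (4 * (r : ℝ) - 3) / (12 * ((r : ℝ) - 1)) := by
  have ht : (2 : ℝ) ≤ (r : ℝ) := by exact_mod_cast hr
  have hne : (2 * (r : ℝ) - 1) ≠ 0 := by intro h; nlinarith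
  have hnn : ((2 * r - 1 : ℕ) : ℝ) = 2 * (r : ℝ) - 1 := by
    have : 1 ≤ 2 * r := by omega
    push_cast [this]; ring
  have hpos21 : (0 : ℝ) < 2 * (r : ℝ) - 1 := by linarith
  have h43 : (0 : ℝ) < 4 * (r : ℝ) - 3 := by linarith
  have hgt1 : (1 : ℝ) < (4 : ℝ) ^ ((1 : ℝ) / (2 * (r : ℝ) - 1)) :=
    (Real.one_lt_rpow_iff_of_pos (by norm_num)).2
      (Or.inl ⟨by norm_num, div_pos one_pos hpos21⟩)
  have hlt : (4 : ℝ) ^ ((1 : ℝ) / (2 * (r : ℝ) - 1)) ≤ 1 + 3 / (4 * (r : ℝ) - 3) := by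
    have hpow : ((4 : ℝ) ^ ((1 : ℝ) / (2 * (r : ℝ) - 1))) ^ (2 * r - 1) = 4 := by
      rw [← Real.rpow_natCast ((4 : ℝ) ^ ((1 : ℝ) / (2 * (r : ℝ) - 1))) (2 * r - 1),
        ← Real.rpow_mul (by norm_num), hnn]
      rw [one_div, inv_mul_cancel₀ hne, Real.rpow_one]
    have h2 := pow_bound r hr
    have ha : (0 : ℝ) ≤ (4 : ℝ) ^ ((1 : ℝ) / (2 * (r : ℝ) - 1)) := le_of_lt (by positivity)
    have hb : (0 : ℝ) ≤ 1 + 3 / (4 * (r : ℝ) - 3) := by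
      have h3 : (0 : ℝ) < 3 / (4 * (r : ℝ) - 3) := div_pos (by norm_num) h43
      linarith
    have hne2 : 2 * r - 1 ≠ 0 := by omega
    rw [← pow_le_pow_iff_left₀ ha hb hne2, hpow]
    exact h2
  have hub : 1 + 3 / (4 * (r : ℝ) - 3) < 3 := by
    have h3 : 3 / (4 * (r : ℝ) - 3) < 2 := by
      rw [div_lt_iff₀ h43]; linarith
    linarith
  have hD1 : (0 : ℝ) < 4 - (4 : ℝ) ^ ((1 : ℝ) / (2 * (r : ℝ) - 1)) := by linarith
  constructor
  · rw [suzukiP]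
    rw [lt_inv_comm₀ (by norm_num) hD1]
    linarith
  · rw [suzukiP]
    have hDlb : 12 * ((r : ℝ) - 1) / (4 * (r : ℝ) - 3)
        ≤ 4 - (4 : ℝ) ^ ((1 : ℝ) / (2 * (r : ℝ) - 1)) := by
      have : 12 * ((r : ℝ) - 1) / (4 * (r : ℝ) - 3) = 3 - 3 / (4 * (r : ℝ) - 3) := by
        rw [div_eq_iff h43.ne', sub_mul, div_mul_cancel₀ _ h43.ne']; ring
      rw [this]; linarith
    have hq : (0 : ℝ) < 12 * ((r : ℝ) - 1) / (4 * (r : ℝ) - 3) := by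
      apply div_pos <;> linarith
    calc (4 - (4 : ℝ) ^ ((1 : ℝ) / (2 * (r : ℝ) - 1)))⁻¹
        ≤ (12 * ((r : ℝ) - 1) / (4 * (r : ℝ) - 3))⁻¹ :=
          inv_anti₀ hq hDlb
      _ = (4 * (r : ℝ) - 3) / (12 * ((r : ℝ) - 1)) := by
          rw [inv_div]

lemma suzukiP_abs (k : ℕ) :
    |suzukiP (k + 2)| ≤ ((k : ℝ) + 2) / (3 * ((k : ℝ) + 1)) ∧
    |1 - 4 * suzukiP (k + 2)| ≤ ((k : ℝ) + 2) / (3 * ((k : ℝ) + 1)) := by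
  obtain ⟨h1, h2⟩ := suzukiP_bounds (k + 2) (by omega)
  push_cast at h1 h2
  have hk1 : (0 : ℝ) < (k : ℝ) + 1 := by positivity
  have hub : suzukiP (k + 2) ≤ ((k : ℝ) + 2) / (3 * ((k : ℝ) + 1)) := by
    refine h2.trans ?_
    rw [div_le_div_iff₀ (by linarith) (by positivity)]
    nlinarith
  constructor
  · rw [abs_of_pos (by linarith)]
    exact hub
  · rw [abs_of_neg (by linarith)]
    have hne1 : ((k : ℝ) + 1) ≠ 0 := by positivity
    have hne1' : ((k : ℝ) + 2 - 1) ≠ 0 := by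
      intro h; apply hne1; linarith
    have e : (4 : ℝ) * ((4 * ((k : ℝ) + 2) - 3) / (12 * ((k : ℝ) + 2 - 1))) - 1
        = ((k : ℝ) + 2) / (3 * ((k : ℝ) + 1)) := by
      field_simp
      ring
    have h4 : 4 * suzukiP (k + 2) - 1
        ≤ 4 * ((4 * ((k : ℝ) + 2) - 3) / (12 * ((k : ℝ) + 2 - 1))) - 1 := by linarith
    linarith [e ▸ h4]

lemma suzukiZ_length (k : ℕ) : (suzukiZ (k + 1)).length = 5 ^ k := by
  induction k with
  | zero => rfl
  | succ n ih =>
    show (suzukiZ (n + 2)).length = 5 ^ (n + 1)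
    rw [suzukiZ]
    simp [ih]
    ring

lemma suzukiZ_entry_bound (k : ℕ) :
    ∀ z ∈ suzukiZ (k + 1), |z| ≤ 4 * ((k : ℝ) + 1) / 3 ^ (k + 1) := by
  induction k with
  | zero =>
    intro z hz
    simp only [suzukiZ, List.mem_singleton] at hz
    subst hz
    norm_num
  | succ n ih =>
    intro z hz
    rw [show n + 1 + 1 = n + 2 from rfl, suzukiZ] at hz
    simp only [List.mem_append, List.mem_map] at hz
    obtain ⟨h1, h2⟩ := suzukiP_abs n
    push_cast
    have key : ∀ c w : ℝ, |c| ≤ ((n : ℝ) + 2) / (3 * ((n : ℝ) + 1)) → w ∈ suzukiZ (n + 1) →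
        |c * w| ≤ 4 * ((n : ℝ) + 1 + 1) / 3 ^ (n + 1 + 1) := by
      intro c w hc hw
      have hw' := ih w hw
      have hn1 : (0 : ℝ) < (n : ℝ) + 1 := by positivity
      have h3 : (0 : ℝ) < (3 : ℝ) ^ (n + 1) := by positivity
      calc |c * w| = |c| * |w| := abs_mul c w
        _ ≤ ((n : ℝ) + 2) / (3 * ((n : ℝ) + 1)) * (4 * ((n : ℝ) + 1) / 3 ^ (n + 1)) := by
            apply mul_le_mul hc hw' (abs_nonneg w) (by positivity)
        _ = 4 * ((n : ℝ) + 1 + 1) / 3 ^ (n + 1 + 1) := by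
            field_simp
            ring
    rcases hz with ((((⟨w, hw, he⟩ | ⟨w, hw, he⟩) | ⟨w, hw, he⟩) | ⟨w, hw, he⟩) | ⟨w, hw, he⟩) <;>
      subst he
    · exact key _ w h1 hw
    · exact key _ w h1 hw
    · exact key _ w h2 hw
    · exact key _ w h1 hw
    · exact key _ w h1 hw

/-- For every `k ≥ 1`, each Suzuki coefficient `z_ℓ` of `Z_k` satisfies `|z_ℓ| ≤ 4k/3^k`, and
consequently `∑_{ℓ=1}^{5^{k-1}} |z_ℓ| ≤ 4k·5^{k-1}/3^k`. -/
theorem suzukiZ_abs_bound (k : ℕ) (hk : 1 ≤ k) :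
    (∀ z ∈ suzukiZ k, |z| ≤ 4 * (k : ℝ) / 3 ^ k) ∧
    ((suzukiZ k).map (fun z => |z|)).sum ≤ 4 * (k : ℝ) * 5 ^ (k - 1) / 3 ^ k := by
  obtain ⟨m, rfl⟩ : ∃ m, k = m + 1 := ⟨k - 1, by omega⟩
  have hcast : ((m + 1 : ℕ) : ℝ) = (m : ℝ) + 1 := by push_cast; ring
  have hent := suzukiZ_entry_bound m
  constructor
  · intro z hz
    rw [hcast]
    exact hent z hz
  · have hsum : ((suzukiZ (m + 1)).map (fun z => |z|)).sum ≤
        ((suzukiZ (m + 1)).map (fun z => |z|)).length • (4 * ((m : ℝ) + 1) / 3 ^ (m + 1)) := by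
      apply List.sum_le_card_nsmul
      intro x hx
      simp only [List.mem_map] at hx
      obtain ⟨z, hz, rfl⟩ := hx
      exact hent z hz
    rw [List.length_map, suzukiZ_length] at hsum
    rw [hcast]
    calc ((suzukiZ (m + 1)).map (fun z => |z|)).sum
        ≤ (5 ^ m : ℕ) • (4 * ((m : ℝ) + 1) / 3 ^ (m + 1)) := hsum
      _ = 4 * ((m : ℝ) + 1) * 5 ^ (m + 1 - 1) / 3 ^ (m + 1) := by
          rw [nsmul_eq_mul]
          push_cast
          ring
end
end

section
/- For r ≥ 2 let p_r = (4 − 4^{1/(2r−1)})^{−1} and q_r = max{p_r, 4p_r − 1}. Then (q_r) is a decreasing sequence of positive numbers, and for every integer k ≥ 1, 3/3^k ≤ ∏_{r=2}^{k} q_r ≤ 4k/3^k (the empty product for k = 1 being 1). -/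
noncomputable section

/-- `q_r = max { p_r, 4 p_r - 1 }`. -/
def suzukiQ (r : ℕ) : ℝ := max (suzukiP r) (4 * suzukiP r - 1)

namespace SuzukiAux

/-- abbreviation for the root appearing in `suzukiP`. -/
def x (r : ℕ) : ℝ := (4 : ℝ) ^ ((1 : ℝ) / (2 * (r : ℝ) - 1))

lemma x_gt_one {r : ℕ} (hr : 2 ≤ r) : 1 < x r := by
  have hr' : (2 : ℝ) ≤ (r : ℝ) := by exact_mod_cast hr
  have hpos : (0 : ℝ) < (1 : ℝ) / (2 * (r : ℝ) - 1) := div_pos one_pos (by linarith)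
  rw [show x r = (4 : ℝ) ^ ((1 : ℝ) / (2 * (r : ℝ) - 1)) from rfl,
    Real.one_lt_rpow_iff_of_pos (by norm_num)]
  exact Or.inl ⟨by norm_num, hpos⟩

lemma x_lt_two {r : ℕ} (hr : 2 ≤ r) : x r < 2 := by
  have hr' : (2 : ℝ) ≤ (r : ℝ) := by exact_mod_cast hr
  have h2 : (2 : ℝ) = (4 : ℝ) ^ ((1 : ℝ) / 2) := by
    rw [show (4 : ℝ) = 2 ^ (2 : ℕ) by norm_num, ← Real.rpow_natCast 2 2,
      ← Real.rpow_mul (by norm_num)]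
    norm_num
  have key : x r < (4 : ℝ) ^ ((1 : ℝ) / 2) := by
    rw [show x r = (4 : ℝ) ^ ((1 : ℝ) / (2 * (r : ℝ) - 1)) from rfl,
      Real.rpow_lt_rpow_left_iff (by norm_num)]
    rw [div_lt_div_iff₀ (by linarith) (by norm_num)]
    linarith
  rw [h2]
  exact key

lemma x_anti {r : ℕ} (hr : 2 ≤ r) : x (r + 1) < x r := by
  have hr' : (2 : ℝ) ≤ (r : ℝ) := by exact_mod_cast hr
  rw [show x (r + 1) = (4 : ℝ) ^ ((1 : ℝ) / (2 * ((r : ℕ) + 1 : ℕ) - 1 : ℝ)) from rfl,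
    show x r = (4 : ℝ) ^ ((1 : ℝ) / (2 * (r : ℝ) - 1)) from rfl,
    Real.rpow_lt_rpow_left_iff (by norm_num)]
  rw [div_lt_div_iff₀ (by push_cast; linarith) (by linarith)]
  push_cast
  linarith

lemma q_eq {r : ℕ} (hr : 2 ≤ r) : suzukiQ r = 4 * suzukiP r - 1 := by
  have h1 := x_gt_one hr
  have h2 := x_lt_two hr
  have hd : (0 : ℝ) < 4 - x r := by linarith
  have hp : (1 : ℝ) / 3 < suzukiP r := by
    rw [suzukiP, show (4 : ℝ) ^ ((1 : ℝ) / (2 * (r : ℝ) - 1)) = x r from rfl]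
    rw [show (1 : ℝ) / 3 = (3 : ℝ)⁻¹ by norm_num]
    exact inv_strictAnti₀ hd (by linarith)
  exact max_eq_right (by linarith)

lemma p_eq (r : ℕ) : suzukiP r = (4 - x r)⁻¹ := rfl

lemma q_third_lt {r : ℕ} (hr : 2 ≤ r) : 1 / 3 < suzukiQ r := by
  have h1 := x_gt_one hr
  have h2 := x_lt_two hr
  have hd : (0 : ℝ) < 4 - x r := by linarith
  have hp : (1 : ℝ) / 3 < suzukiP r := by
    rw [p_eq, show (1 : ℝ) / 3 = (3 : ℝ)⁻¹ by norm_num]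
    exact inv_strictAnti₀ hd (by linarith)
  rw [q_eq hr]
  linarith

/-- reduction: `4 ≤ c^n` forces `4^(1/n) ≤ c`. -/
lemma rpow_le_of_pow {n : ℕ} (hn : 0 < n) {c : ℝ} (hc : 0 < c) (h : (4 : ℝ) ≤ c ^ n) :
    (4 : ℝ) ^ ((1 : ℝ) / (n : ℝ)) ≤ c := by
  have hn' : ((n : ℝ)) ≠ 0 := by positivity
  have := Real.rpow_le_rpow (by norm_num) h (by positivity : (0 : ℝ) ≤ 1 / (n : ℝ))
  rwa [← Real.rpow_natCast c n, ← Real.rpow_mul hc.le, mul_one_div, div_self hn',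
    Real.rpow_one] at this

/-- key inequality: `4^(1/(2r-1)) ≤ 4r/(4r-3)` for `r ≥ 2`. -/
lemma x_key {r : ℕ} (hr : 2 ≤ r) : x r ≤ 4 * (r : ℝ) / (4 * (r : ℝ) - 3) := by
  rcases le_or_gt 7 r with h7 | h7
  · -- large case via logarithms
    have hr' : (7 : ℝ) ≤ (r : ℝ) := by exact_mod_cast h7
    set c : ℝ := 4 * (r : ℝ) / (4 * (r : ℝ) - 3) with hc
    have hden : (0 : ℝ) < 4 * (r : ℝ) - 3 := by linarith
    have hcpos : 0 < c := by positivity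
    have hlogc : 3 / (4 * (r : ℝ)) ≤ Real.log c := by
      have hinv : Real.log c⁻¹ ≤ c⁻¹ - 1 := Real.log_le_sub_one_of_pos (by positivity)
      rw [Real.log_inv] at hinv
      have hcinv : c⁻¹ = (4 * (r : ℝ) - 3) / (4 * (r : ℝ)) := by
        rw [hc]; field_simp
      rw [hcinv] at hinv
      have : 1 - (4 * (r : ℝ) - 3) / (4 * (r : ℝ)) = 3 / (4 * (r : ℝ)) := by
        field_simp
        ring
      linarith
    have hlog4 : Real.log 4 = 2 * Real.log 2 := by
      rw [show (4 : ℝ) = 2 ^ (2 : ℕ) by norm_num, Real.log_pow]; push_cast; ring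
    have hlog2 := Real.log_two_lt_d9
    have hexp : (1 : ℝ) / (2 * (r : ℝ) - 1) * Real.log 4 ≤ Real.log c := by
      have h1 : (1 : ℝ) / (2 * (r : ℝ) - 1) * Real.log 4 ≤
          (1 : ℝ) / (2 * (r : ℝ) - 1) * (2 * 0.6931471808) := by
        have : Real.log 4 ≤ 2 * 0.6931471808 := by rw [hlog4]; linarith
        have hpos : (0 : ℝ) < (1 : ℝ) / (2 * (r : ℝ) - 1) := div_pos one_pos (by linarith)
        nlinarith
      have h2 : (1 : ℝ) / (2 * (r : ℝ) - 1) * (2 * 0.6931471808) ≤ 3 / (4 * (r : ℝ)) := by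
        rw [div_mul_eq_mul_div, div_le_div_iff₀ (by linarith) (by linarith)]
        nlinarith
      linarith
    calc x r = Real.exp (Real.log 4 * ((1 : ℝ) / (2 * (r : ℝ) - 1))) :=
          Real.rpow_def_of_pos (by norm_num) _
      _ ≤ Real.exp (Real.log c) := by
          apply Real.exp_le_exp.2; rw [mul_comm]; exact hexp
      _ = c := Real.exp_log hcpos
  · -- small cases r = 2,...,6
    interval_cases r
    · have : x 2 = (4 : ℝ) ^ ((1 : ℝ) / ((3 : ℕ) : ℝ)) := by simp only [x]; norm_num
      rw [this]
      refine le_trans (rpow_le_of_pow (n := 3) (c := 8/5) (by norm_num) (by norm_num)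
        (by norm_num)) (by norm_num)
    · have : x 3 = (4 : ℝ) ^ ((1 : ℝ) / ((5 : ℕ) : ℝ)) := by simp only [x]; norm_num
      rw [this]
      refine le_trans (rpow_le_of_pow (n := 5) (c := 4/3) (by norm_num) (by norm_num)
        (by norm_num)) (by norm_num)
    · have : x 4 = (4 : ℝ) ^ ((1 : ℝ) / ((7 : ℕ) : ℝ)) := by simp only [x]; norm_num
      rw [this]
      refine le_trans (rpow_le_of_pow (n := 7) (c := 16/13) (by norm_num) (by norm_num)
        (by norm_num)) (by norm_num)
    · have : x 5 = (4 : ℝ) ^ ((1 : ℝ) / ((9 : ℕ) : ℝ)) := by simp only [x]; norm_num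
      rw [this]
      refine le_trans (rpow_le_of_pow (n := 9) (c := 20/17) (by norm_num) (by norm_num)
        (by norm_num)) (by norm_num)
    · have : x 6 = (4 : ℝ) ^ ((1 : ℝ) / ((11 : ℕ) : ℝ)) := by simp only [x]; norm_num
      rw [this]
      refine le_trans (rpow_le_of_pow (n := 11) (c := 8/7) (by norm_num) (by norm_num)
        (by norm_num)) (by norm_num)

/-- the crucial one-step bound: `q_r ≤ r / (3(r-1))`. -/
lemma q_le {r : ℕ} (hr : 2 ≤ r) : suzukiQ r ≤ (r : ℝ) / (3 * ((r : ℝ) - 1)) := by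
  have hr' : (2 : ℝ) ≤ (r : ℝ) := by exact_mod_cast hr
  have h1 := x_gt_one hr
  have h2 := x_lt_two hr
  have hd : (0 : ℝ) < 4 - x r := by linarith
  have hkey := x_key hr
  have hq : suzukiQ r = x r / (4 - x r) := by
    rw [q_eq hr, p_eq]
    field_simp
    ring
  rw [hq]
  have hb : (12 * (r : ℝ) - 12) / (4 * (r : ℝ) - 3) ≤ 4 - x r := by
    have hden : (0 : ℝ) < 4 * (r : ℝ) - 3 := by linarith
    have : 4 - 4 * (r : ℝ) / (4 * (r : ℝ) - 3) = (12 * (r : ℝ) - 12) / (4 * (r : ℝ) - 3) := by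
      field_simp; ring
    linarith
  have hbpos : (0 : ℝ) < (12 * (r : ℝ) - 12) / (4 * (r : ℝ) - 3) := by
    apply div_pos <;> linarith
  have hden : (0 : ℝ) < 4 * (r : ℝ) - 3 := by linarith
  calc x r / (4 - x r) ≤ (4 * (r : ℝ) / (4 * (r : ℝ) - 3)) /
        ((12 * (r : ℝ) - 12) / (4 * (r : ℝ) - 3)) := by
        apply div_le_div₀ (div_nonneg (by positivity) hden.le) hkey hbpos hb
    _ = (r : ℝ) / (3 * ((r : ℝ) - 1)) := by
        have h1' : (4 * (r : ℝ) - 3) ≠ 0 := by linarith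
        have h2' : (12 * (r : ℝ) - 12) ≠ 0 := by linarith
        have h3' : (r : ℝ) - 1 ≠ 0 := by linarith
        field_simp
        ring

end SuzukiAux

/-- The `q_r` form a decreasing sequence of positive numbers, and for every `k ≥ 1`,
`3/3^k ≤ ∏_{r=2}^{k} q_r ≤ 4k/3^k` (the empty product for `k = 1` being `1`). -/
theorem suzukiQ_decreasing_pos_and_prod_bounds :
    (∀ r : ℕ, 2 ≤ r → 0 < suzukiQ r) ∧
    (∀ r : ℕ, 2 ≤ r → suzukiQ (r + 1) < suzukiQ r) ∧
    (∀ k : ℕ, 1 ≤ k →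
      3 / 3 ^ k ≤ ∏ r ∈ Finset.Icc 2 k, suzukiQ r ∧
      ∏ r ∈ Finset.Icc 2 k, suzukiQ r ≤ 4 * (k : ℝ) / 3 ^ k) := by
  open SuzukiAux in
  refine ⟨fun r hr => lt_trans (by norm_num) (q_third_lt hr), ?_, ?_⟩
  · intro r hr
    have hr1 : 2 ≤ r + 1 := le_trans hr (Nat.le_succ r)
    have h1 := x_gt_one hr
    have h2 := x_lt_two hr
    have h1' := x_gt_one hr1
    have h2' := x_lt_two hr1
    have ha := x_anti hr
    rw [q_eq hr, q_eq hr1, p_eq, p_eq]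
    have : (4 - x r)⁻¹ > (4 - x (r + 1))⁻¹ :=
      inv_strictAnti₀ (by linarith) (by linarith)
    linarith
  · intro k hk
    induction k, hk using Nat.le_induction with
    | base => norm_num
    | succ k hk ih =>
      have hk2 : 2 ≤ k + 1 := by omega
      rw [Finset.prod_Icc_succ_top hk2]
      have hkR : (1 : ℝ) ≤ (k : ℝ) := by exact_mod_cast hk
      have hqpos : (0 : ℝ) < suzukiQ (k + 1) := lt_trans (by norm_num) (q_third_lt hk2)
      have hqlo : 1 / 3 ≤ suzukiQ (k + 1) := (q_third_lt hk2).le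
      have hqhi : suzukiQ (k + 1) ≤ ((k : ℝ) + 1) / (3 * (k : ℝ)) := by
        have := q_le hk2
        push_cast at this
        convert this using 2 <;> ring
      have hprodpos : (0 : ℝ) ≤ ∏ r ∈ Finset.Icc 2 k, suzukiQ r := by
        apply Finset.prod_nonneg
        intro i hi
        have : 2 ≤ i := (Finset.mem_Icc.1 hi).1
        exact (lt_trans (by norm_num) (q_third_lt this)).le
      constructor
      · have hlo : 3 / 3 ^ k * (1 / 3) ≤ (∏ r ∈ Finset.Icc 2 k, suzukiQ r) * suzukiQ (k + 1) :=
          mul_le_mul ih.1 hqlo (by norm_num) hprodpos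
        have : (3 : ℝ) / 3 ^ (k + 1) = 3 / 3 ^ k * (1 / 3) := by
          rw [pow_succ]; ring
        push_cast
        rw [this]
        exact hlo
      · have hhi : (∏ r ∈ Finset.Icc 2 k, suzukiQ r) * suzukiQ (k + 1) ≤
            (4 * (k : ℝ) / 3 ^ k) * (((k : ℝ) + 1) / (3 * (k : ℝ))) := by
          apply mul_le_mul ih.2 hqhi hqpos.le
          positivity
        have heq : (4 * (k : ℝ) / 3 ^ k) * (((k : ℝ) + 1) / (3 * (k : ℝ))) =
            4 * ((k : ℝ) + 1) / 3 ^ (k + 1) := by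
          rw [pow_succ]
          field_simp
        push_cast
        rw [← heq]
        exact hhi
end
end
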